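/- Let v, w ∈ ℝ² be linearly independent with det(v, w) = 1, and let K₁ ⊆ ℝ² be a compact convex set with 0, v, w ∈ K₁ and K₁ ⊆ conv{0, v, w, v + w}. For λ ∈ [0,1] set z_λ := (1−λ)·w − λ·v and s(λ) := sup_{x ∈ K₁} |det(x, z_λ)|, and set K₂ := {α · z_λ : λ ∈ [0,1], 0 ≤ α ≤ 1/s(λ)}. Then the set K := K₁ ∪ K₂ ∪ (−K₁) ∪ (−K₂) is convex. (Its boundary is the Radon curve γ = γ₁ ∪ γ₂ ∪ (−γ₁) ∪ (−γ₂), so every Radon curve is the boundary of a convex body.) -/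

import Mathlib

set_option maxHeartbeats 1000000

/-- The standard determinant form on ℝ². -/
def det2 (x y : ℝ × ℝ) : ℝ := x.1 * y.2 - x.2 * y.1

/-- The region enclosed by a Radon curve, namely `K₁ ∪ K₂ ∪ (−K₁) ∪ (−K₂)`,
is convex; hence every Radon curve bounds a convex body. -/
theorem stmt_7 (v w : ℝ × ℝ) (hind : LinearIndependent ℝ ![v, w])
    (hdet : det2 v w = 1)
    (K₁ : Set (ℝ × ℝ)) (hK₁c : IsCompact K₁) (hK₁conv : Convex ℝ K₁)
    (h0 : (0 : ℝ × ℝ) ∈ K₁) (hvK : v ∈ K₁) (hwK : w ∈ K₁)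
    (hK₁sub : K₁ ⊆ convexHull ℝ {0, v, w, v + w})
    (z : ℝ → ℝ × ℝ) (hz : ∀ l : ℝ, z l = (1 - l) • w - l • v)
    (s : ℝ → ℝ) (hs : ∀ l : ℝ, s l = sSup ((fun x => |det2 x (z l)|) '' K₁))
    (K₂ : Set (ℝ × ℝ))
    (hK₂ : K₂ = {p | ∃ l ∈ Set.Icc (0 : ℝ) 1, ∃ α : ℝ,
      0 ≤ α ∧ α ≤ (s l)⁻¹ ∧ p = α • z l}) :
    Convex ℝ (K₁ ∪ K₂ ∪ (-K₁) ∪ (-K₂)) := by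
  have hdet' : v.1 * w.2 - v.2 * w.1 = 1 := hdet
  have hL : ∀ (c d : ℝ) (x₁ x₂ y : ℝ × ℝ),
      det2 (c • x₁ + d • x₂) y = c * det2 x₁ y + d * det2 x₂ y := by
    intros; simp [det2]; ring
  have hR : ∀ (c d : ℝ) (x y₁ y₂ : ℝ × ℝ),
      det2 x (c • y₁ + d • y₂) = c * det2 x y₁ + d * det2 x y₂ := by
    intros; simp [det2]; ring
  have hRs : ∀ (c d : ℝ) (x y₁ y₂ : ℝ × ℝ),
      det2 x (c • y₁ - d • y₂) = c * det2 x y₁ - d * det2 x y₂ := by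
    intros; simp [det2]; ring
  have hsmulR : ∀ (c : ℝ) (x y : ℝ × ℝ), det2 x (c • y) = c * det2 x y := by
    intros; simp [det2]; ring
  have hnegR : ∀ (x y : ℝ × ℝ), det2 x (-y) = - det2 x y := by
    intros; simp [det2]; ring
  have hnegL : ∀ (x y : ℝ × ℝ), det2 (-x) y = - det2 x y := by
    intros; simp [det2]; ring
  have hswap : ∀ (x y : ℝ × ℝ), det2 x y = - det2 y x := by
    intros; simp [det2]; ring
  have hvv : det2 v v = 0 := by simp [det2]; ring
  have hww : det2 w w = 0 := by simp [det2]; ring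
  have hplucker : ∀ x y : ℝ × ℝ,
      det2 x y = det2 x w * det2 v y - det2 v x * det2 y w := by
    intro x y; simp only [det2]
    linear_combination (-(x.1 * y.2) + x.2 * y.1) * hdet'
  have hrepr : ∀ x : ℝ × ℝ, x = det2 x w • v + det2 v x • w := by
    intro x
    have h1 : x.1 = det2 x w * v.1 + det2 v x * w.1 := by
      simp only [det2]; linear_combination (-x.1) * hdet'
    have h2 : x.2 = det2 x w * v.2 + det2 v x * w.2 := by
      simp only [det2]; linear_combination (-x.2) * hdet'
    apply Prod.ext <;> simpa using ‹_›
  have hco : ∀ x ∈ K₁, 0 ≤ det2 x w ∧ det2 x w ≤ 1 ∧ 0 ≤ det2 v x ∧ det2 v x ≤ 1 := by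
    have hconv : Convex ℝ {y : ℝ × ℝ |
        0 ≤ det2 y w ∧ det2 y w ≤ 1 ∧ 0 ≤ det2 v y ∧ det2 v y ≤ 1} := by
      intro y₁ hy₁ y₂ hy₂ c d hc hd hcd
      simp only [Set.mem_setOf_eq] at hy₁ hy₂ ⊢
      rw [hL c d y₁ y₂ w, hR c d v y₁ y₂]
      obtain ⟨a1, a2, a3, a4⟩ := hy₁
      obtain ⟨b1, b2, b3, b4⟩ := hy₂
      refine ⟨?_, ?_, ?_, ?_⟩ <;> nlinarith [mul_nonneg hc a1, mul_nonneg hd b1,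
        mul_nonneg hc a3, mul_nonneg hd b3, mul_le_mul_of_nonneg_left a2 hc,
        mul_le_mul_of_nonneg_left b2 hd, mul_le_mul_of_nonneg_left a4 hc,
        mul_le_mul_of_nonneg_left b4 hd]
    intro x hx
    have hvert : ({0, v, w, v + w} : Set (ℝ × ℝ)) ⊆ {y : ℝ × ℝ |
        0 ≤ det2 y w ∧ det2 y w ≤ 1 ∧ 0 ≤ det2 v y ∧ det2 v y ≤ 1} := by
      intro y hy
      simp only [Set.mem_insert_iff, Set.mem_singleton_iff] at hy
      rcases hy with rfl | rfl | rfl | rfl <;>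
        refine ⟨?_, ?_, ?_, ?_⟩ <;> simp [det2] <;> nlinarith [hdet']
    exact convexHull_min hvert hconv (hK₁sub hx)
  have hK2set : K₂ = {x : ℝ × ℝ |
      det2 x w ≤ 0 ∧ 0 ≤ det2 v x ∧ ∀ y ∈ K₁, det2 y x ≤ 1} := by
    have hzdet : ∀ (l : ℝ) (y : ℝ × ℝ),
        det2 y (z l) = (1 - l) * det2 y w + l * det2 v y := by
      intro l y; rw [hz l, hRs, hswap y v]; ring
    have hzv : ∀ l : ℝ, det2 v (z l) = 1 - l := by
      intro l; rw [hzdet, hdet, hvv]; ring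
    have hzw : ∀ l : ℝ, det2 w (z l) = l := by
      intro l; rw [hzdet, hww, hdet]; ring
    have hsfact : ∀ l : ℝ, 0 ≤ l → l ≤ 1 →
        0 < s l ∧ s l ≤ 1 ∧ ∀ y ∈ K₁, 0 ≤ det2 y (z l) ∧ det2 y (z l) ≤ s l := by
      intro l h0l hl1
      have hnn : ∀ y ∈ K₁, 0 ≤ det2 y (z l) := by
        intro y hy
        obtain ⟨h1, h2, h3, h4⟩ := hco y hy
        rw [hzdet]; nlinarith
      have hub : ∀ y ∈ K₁, det2 y (z l) ≤ 1 := by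
        intro y hy
        obtain ⟨h1, h2, h3, h4⟩ := hco y hy
        rw [hzdet]; nlinarith
      have hbdd : BddAbove ((fun x => |det2 x (z l)|) '' K₁) := by
        refine ⟨1, ?_⟩
        rintro r ⟨y, hy, rfl⟩
        simpa [abs_of_nonneg (hnn y hy)] using hub y hy
      have hle : ∀ y ∈ K₁, det2 y (z l) ≤ s l := by
        intro y hy
        rw [hs]
        exact le_trans (le_abs_self _) (le_csSup hbdd ⟨y, hy, rfl⟩)
      have hsl1 : s l ≤ 1 := by
        rw [hs]
        apply csSup_le ⟨_, Set.mem_image_of_mem _ h0⟩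
        rintro r ⟨y, hy, rfl⟩
        simpa [abs_of_nonneg (hnn y hy)] using hub y hy
      have hpos : 0 < s l := by
        have h1 : det2 v (z l) ≤ s l := hle v hvK
        have h2 : det2 w (z l) ≤ s l := hle w hwK
        rw [hzv] at h1; rw [hzw] at h2; linarith
      exact ⟨hpos, hsl1, fun y hy => ⟨hnn y hy, hle y hy⟩⟩
    rw [hK₂]; ext p
    simp only [Set.mem_setOf_eq, Set.mem_Icc]
    constructor
    · rintro ⟨l, ⟨h0l, hl1⟩, α, hα0, hαs, rfl⟩
      obtain ⟨hpos, hsl1, hyb⟩ := hsfact l h0l hl1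
      refine ⟨?_, ?_, ?_⟩
      · rw [hswap, hsmulR, hzw l]; nlinarith
      · rw [hsmulR, hzv l]; nlinarith
      · intro y hy
        rw [hsmulR]
        have h1 : det2 y (z l) ≤ s l := (hyb y hy).2
        have h2 : α * s l ≤ 1 := by
          have h3 := mul_le_mul_of_nonneg_right hαs (le_of_lt hpos)
          rwa [inv_mul_cancel₀ (ne_of_gt hpos)] at h3
        nlinarith
    · rintro ⟨hpa, hpb, hpall⟩
      rcases eq_or_lt_of_le (by linarith : (0:ℝ) ≤ -det2 p w + det2 v p) with heq | hlt
      · refine ⟨0, ⟨le_rfl, zero_le_one⟩, 0, le_rfl, ?_, ?_⟩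
        · have := (hsfact 0 le_rfl zero_le_one).1
          positivity
        · rw [zero_smul]
          have hA : det2 p w = 0 := by linarith
          have hB : det2 v p = 0 := by linarith
          have := hrepr p
          rw [hA, hB] at this
          simpa using this
      · obtain ⟨A, hAdef⟩ : ∃ A : ℝ, A = -det2 p w := ⟨_, rfl⟩
        obtain ⟨B, hBdef⟩ : ∃ B : ℝ, B = det2 v p := ⟨_, rfl⟩
        have hpw : det2 p w = -A := by rw [hAdef]; ring
        have hABpos : 0 < A + B := by rw [hAdef, hBdef]; linarith
        have hne : A + B ≠ 0 := ne_of_gt hABpos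
        have hA0 : 0 ≤ A := by rw [hAdef]; linarith
        have hB0 : 0 ≤ B := by rw [hBdef]; exact hpb
        obtain ⟨l, hldef⟩ : ∃ l : ℝ, l = A / (A + B) := ⟨_, rfl⟩
        have hl0 : 0 ≤ l := by rw [hldef]; exact div_nonneg hA0 hABpos.le
        have hl1 : l ≤ 1 := by rw [hldef, div_le_one hABpos]; linarith
        obtain ⟨hpos, hsl1, hyb⟩ := hsfact l hl0 hl1
        refine ⟨l, ⟨hl0, hl1⟩, A + B, hABpos.le, ?_, ?_⟩
        · -- A + B ≤ (s l)⁻¹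
          have hsle : s l ≤ (A + B)⁻¹ := by
            rw [hs]
            apply csSup_le ⟨_, Set.mem_image_of_mem _ h0⟩
            rintro r ⟨y, hy, rfl⟩
            simp only
            rw [abs_of_nonneg (hyb y hy).1]
            have key : (A + B) * det2 y (z l) = det2 y p := by
              rw [hzdet, hplucker y p, hpw, ← hBdef, hldef]
              field_simp; ring
            have h1 : det2 y p ≤ 1 := hpall y hy
            rw [← mul_le_mul_iff_right₀ hABpos, key, mul_inv_cancel₀ hne]
            exact h1
          have h1 : (A + B) * s l ≤ 1 := by
            have h2 := mul_le_mul_of_nonneg_left hsle hABpos.le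
            rwa [mul_inv_cancel₀ hne] at h2
          rw [← one_div, le_div_iff₀ hpos]
          exact h1
        · -- p = (A+B) • z l
          have h2 : (A + B) • z l = det2 p w • v + det2 v p • w := by
            rw [hz l, hpw, ← hBdef, hldef]
            match_scalars <;> field_simp <;> ring
          rw [h2, ← hrepr p]
  obtain ⟨A2, hA2⟩ : ∃ A2 : Set (ℝ × ℝ),
      A2 = {x : ℝ × ℝ | det2 x w ≤ 0 ∧ 0 ≤ det2 v x ∧ ∀ y ∈ K₁, det2 y x ≤ 1} :=
    ⟨_, rfl⟩
  have hK2A2 : K₂ = A2 := by rw [hK2set, hA2]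
  have hCL : ∀ y₁ y₂ : ℝ × ℝ,
      det2 y₁ w ≤ 1 → det2 v y₁ ≤ 1 → (det2 y₁ w ≤ 0 ∨ det2 v y₁ ≤ 0) →
      0 ≤ det2 y₂ w → det2 y₂ w ≤ 1 → 0 ≤ det2 v y₂ → det2 v y₂ ≤ 1 →
      ∃ u : ℝ, 0 ≤ u ∧ u ≤ 1 ∧ (1 - u) • y₁ + u • y₂ ∈ K₁ := by
    intro y₁ y₂ ha1le hb1le hdisj ha2ge ha2le hb2ge hb2le
    have hseg0w : ∀ c : ℝ, 0 ≤ c → c ≤ 1 → c • w ∈ K₁ := by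
      intro c hc0 hc1
      have := hK₁conv h0 hwK (by linarith : (0:ℝ) ≤ 1 - c) hc0 (by ring)
      simpa using this
    have hseg0v : ∀ c : ℝ, 0 ≤ c → c ≤ 1 → c • v ∈ K₁ := by
      intro c hc0 hc1
      have := hK₁conv h0 hvK (by linarith : (0:ℝ) ≤ 1 - c) hc0 (by ring)
      simpa using this
    obtain ⟨a1, ha1⟩ : ∃ r : ℝ, r = det2 y₁ w := ⟨_, rfl⟩
    obtain ⟨b1, hb1⟩ : ∃ r : ℝ, r = det2 v y₁ := ⟨_, rfl⟩
    obtain ⟨a2, ha2⟩ : ∃ r : ℝ, r = det2 y₂ w := ⟨_, rfl⟩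
    obtain ⟨b2, hb2⟩ : ∃ r : ℝ, r = det2 v y₂ := ⟨_, rfl⟩
    rw [← ha1] at ha1le; rw [← hb1] at hb1le
    rw [← ha1, ← hb1] at hdisj
    rw [← ha2] at ha2ge ha2le; rw [← hb2] at hb2ge hb2le
    have key : ∀ u : ℝ, (1-u)*a1 + u*a2 = 0 → 0 ≤ (1-u)*b1 + u*b2 →
        (1-u)*b1 + u*b2 ≤ 1 → (1 - u) • y₁ + u • y₂ ∈ K₁ := by
      intro u h1 h2 h3
      have hxa : det2 ((1-u) • y₁ + u • y₂) w = (1-u)*a1 + u*a2 := by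
        rw [hL, ← ha1, ← ha2]
      have hxb : det2 v ((1-u) • y₁ + u • y₂) = (1-u)*b1 + u*b2 := by
        rw [hR, ← hb1, ← hb2]
      have hx := hrepr ((1-u) • y₁ + u • y₂)
      rw [hxa, hxb, h1, zero_smul, zero_add] at hx
      rw [hx]
      exact hseg0w _ h2 h3
    have keyb : ∀ u : ℝ, (1-u)*b1 + u*b2 = 0 → 0 ≤ (1-u)*a1 + u*a2 →
        (1-u)*a1 + u*a2 ≤ 1 → (1 - u) • y₁ + u • y₂ ∈ K₁ := by
      intro u h1 h2 h3
      have hxa : det2 ((1-u) • y₁ + u • y₂) w = (1-u)*a1 + u*a2 := by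
        rw [hL, ← ha1, ← ha2]
      have hxb : det2 v ((1-u) • y₁ + u • y₂) = (1-u)*b1 + u*b2 := by
        rw [hR, ← hb1, ← hb2]
      have hx := hrepr ((1-u) • y₁ + u • y₂)
      rw [hxa, hxb, h1, zero_smul, add_zero] at hx
      rw [hx]
      exact hseg0v _ h2 h3
    rcases hdisj with hA | hB
    · rcases lt_or_eq_of_le hA with hlt | heqz
      · -- a1 < 0 : cross the a-axis first
        have hden : a1 - a2 < 0 := by linarith
        obtain ⟨u, hu⟩ : ∃ u : ℝ, u = a1/(a1-a2) := ⟨_, rfl⟩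
        have hu0 : 0 ≤ u := by
          rw [hu, div_nonneg_iff]; right; exact ⟨hlt.le, hden.le⟩
        have hu1 : u ≤ 1 := by
          have h' : u - 1 = a2/(a1-a2) := by rw [hu]; field_simp [hden.ne]; ring
          have h'' : a2/(a1-a2) ≤ 0 := by
            rw [div_nonpos_iff]; left; exact ⟨ha2ge, hden.le⟩
          linarith
        have heq0 : (1-u)*a1 + u*a2 = 0 := by rw [hu]; field_simp [hden.ne]; ring
        have hbb1 : (1-u)*b1 + u*b2 ≤ 1 := by
          nlinarith [mul_le_mul_of_nonneg_left hb1le (by linarith : (0:ℝ) ≤ 1-u),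
            mul_le_mul_of_nonneg_left hb2le hu0]
        rcases le_or_gt 0 ((1-u)*b1 + u*b2) with hbbp | hbbn
        · exact ⟨u, hu0, hu1, key u heq0 hbbp hbb1⟩
        · have hu1' : u < 1 := by
            rcases lt_or_eq_of_le hu1 with h | h
            · exact h
            · exfalso; rw [h] at hbbn; nlinarith
          have hb1n : b1 < 0 := by nlinarith [mul_nonneg hu0 hb2ge]
          have hdenb : b1 - b2 < 0 := by linarith
          obtain ⟨t, ht⟩ : ∃ t : ℝ, t = b1/(b1-b2) := ⟨_, rfl⟩
          have ht1 : t ≤ 1 := by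
            have h' : t - 1 = b2/(b1-b2) := by rw [ht]; field_simp [hdenb.ne]; ring
            have h'' : b2/(b1-b2) ≤ 0 := by
              rw [div_nonpos_iff]; left; exact ⟨hb2ge, hdenb.le⟩
            linarith
          have hut : u ≤ t := by
            have h' : t - u = ((1-u)*b1 + u*b2)/(b1-b2) := by
              rw [ht]; field_simp [hdenb.ne]; ring
            have h'' : 0 ≤ ((1-u)*b1 + u*b2)/(b1-b2) := by
              rw [div_nonneg_iff]; right; exact ⟨hbbn.le, hdenb.le⟩
            linarith
          have ht0 : 0 ≤ t := le_trans hu0 hut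
          have heqb : (1-t)*b1 + t*b2 = 0 := by rw [ht]; field_simp [hdenb.ne]; ring
          have hkey : (1-u) * ((1-t)*a1 + t*a2) = (t-u)*a2 := by
            linear_combination (1-t) * heq0
          have hF0 : 0 ≤ (1-t)*a1 + t*a2 := by
            nlinarith [mul_nonneg (by linarith : (0:ℝ) ≤ t-u) ha2ge]
          have hF1 : (1-t)*a1 + t*a2 ≤ 1 := by
            nlinarith [mul_le_mul_of_nonneg_left ha2le (by linarith : (0:ℝ) ≤ t-u)]
          exact ⟨t, ht0, ht1, keyb t heqb hF0 hF1⟩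
      · -- a1 = 0
        rcases le_or_gt 0 b1 with hb | hb
        · exact ⟨0, le_rfl, zero_le_one, key 0 (by rw [heqz]; ring)
            (by linarith) (by linarith)⟩
        · have hdenb : b1 - b2 < 0 := by linarith
          obtain ⟨t, ht⟩ : ∃ t : ℝ, t = b1/(b1-b2) := ⟨_, rfl⟩
          have ht0 : 0 ≤ t := by
            rw [ht, div_nonneg_iff]; right; exact ⟨hb.le, hdenb.le⟩
          have ht1 : t ≤ 1 := by
            have h' : t - 1 = b2/(b1-b2) := by rw [ht]; field_simp [hdenb.ne]; ring
            have h'' : b2/(b1-b2) ≤ 0 := by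
              rw [div_nonpos_iff]; left; exact ⟨hb2ge, hdenb.le⟩
            linarith
          have heqb : (1-t)*b1 + t*b2 = 0 := by rw [ht]; field_simp [hdenb.ne]; ring
          have hF0 : 0 ≤ (1-t)*a1 + t*a2 := by
            rw [heqz]; nlinarith [mul_nonneg ht0 ha2ge]
          have hF1 : (1-t)*a1 + t*a2 ≤ 1 := by
            rw [heqz]; nlinarith [mul_le_mul_of_nonneg_left ha2le ht0]
          exact ⟨t, ht0, ht1, keyb t heqb hF0 hF1⟩
    · rcases lt_or_eq_of_le hB with hlt | heqz
      · -- b1 < 0 : cross the b-axis first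
        have hden : b1 - b2 < 0 := by linarith
        obtain ⟨u, hu⟩ : ∃ u : ℝ, u = b1/(b1-b2) := ⟨_, rfl⟩
        have hu0 : 0 ≤ u := by
          rw [hu, div_nonneg_iff]; right; exact ⟨hlt.le, hden.le⟩
        have hu1 : u ≤ 1 := by
          have h' : u - 1 = b2/(b1-b2) := by rw [hu]; field_simp [hden.ne]; ring
          have h'' : b2/(b1-b2) ≤ 0 := by
            rw [div_nonpos_iff]; left; exact ⟨hb2ge, hden.le⟩
          linarith
        have heq0 : (1-u)*b1 + u*b2 = 0 := by rw [hu]; field_simp [hden.ne]; ring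
        have haa1 : (1-u)*a1 + u*a2 ≤ 1 := by
          nlinarith [mul_le_mul_of_nonneg_left ha1le (by linarith : (0:ℝ) ≤ 1-u),
            mul_le_mul_of_nonneg_left ha2le hu0]
        rcases le_or_gt 0 ((1-u)*a1 + u*a2) with haap | haan
        · exact ⟨u, hu0, hu1, keyb u heq0 haap haa1⟩
        · have hu1' : u < 1 := by
            rcases lt_or_eq_of_le hu1 with h | h
            · exact h
            · exfalso; rw [h] at haan; nlinarith
          have ha1n : a1 < 0 := by nlinarith [mul_nonneg hu0 ha2ge]
          have hdena : a1 - a2 < 0 := by linarith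
          obtain ⟨t, ht⟩ : ∃ t : ℝ, t = a1/(a1-a2) := ⟨_, rfl⟩
          have ht1 : t ≤ 1 := by
            have h' : t - 1 = a2/(a1-a2) := by rw [ht]; field_simp [hdena.ne]; ring
            have h'' : a2/(a1-a2) ≤ 0 := by
              rw [div_nonpos_iff]; left; exact ⟨ha2ge, hdena.le⟩
            linarith
          have hut : u ≤ t := by
            have h' : t - u = ((1-u)*a1 + u*a2)/(a1-a2) := by
              rw [ht]; field_simp [hdena.ne]; ring
            have h'' : 0 ≤ ((1-u)*a1 + u*a2)/(a1-a2) := by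
              rw [div_nonneg_iff]; right; exact ⟨haan.le, hdena.le⟩
            linarith
          have ht0 : 0 ≤ t := le_trans hu0 hut
          have heqa : (1-t)*a1 + t*a2 = 0 := by rw [ht]; field_simp [hdena.ne]; ring
          have hkey : (1-u) * ((1-t)*b1 + t*b2) = (t-u)*b2 := by
            linear_combination (1-t) * heq0
          have hF0 : 0 ≤ (1-t)*b1 + t*b2 := by
            nlinarith [mul_nonneg (by linarith : (0:ℝ) ≤ t-u) hb2ge]
          have hF1 : (1-t)*b1 + t*b2 ≤ 1 := by
            nlinarith [mul_le_mul_of_nonneg_left hb2le (by linarith : (0:ℝ) ≤ t-u)]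
          exact ⟨t, ht0, ht1, key t heqa hF0 hF1⟩
      · -- b1 = 0
        rcases le_or_gt 0 a1 with ha | ha
        · exact ⟨0, le_rfl, zero_le_one, keyb 0 (by rw [heqz]; ring)
            (by linarith) (by linarith)⟩
        · have hdena : a1 - a2 < 0 := by linarith
          obtain ⟨t, ht⟩ : ∃ t : ℝ, t = a1/(a1-a2) := ⟨_, rfl⟩
          have ht0 : 0 ≤ t := by
            rw [ht, div_nonneg_iff]; right; exact ⟨ha.le, hdena.le⟩
          have ht1 : t ≤ 1 := by
            have h' : t - 1 = a2/(a1-a2) := by rw [ht]; field_simp [hdena.ne]; ring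
            have h'' : a2/(a1-a2) ≤ 0 := by
              rw [div_nonpos_iff]; left; exact ⟨ha2ge, hdena.le⟩
            linarith
          have heqa : (1-t)*a1 + t*a2 = 0 := by rw [ht]; field_simp [hdena.ne]; ring
          have hF0 : 0 ≤ (1-t)*b1 + t*b2 := by
            rw [heqz]; nlinarith [mul_nonneg ht0 hb2ge]
          have hF1 : (1-t)*b1 + t*b2 ≤ 1 := by
            rw [heqz]; nlinarith [mul_le_mul_of_nonneg_left hb2le ht0]
          exact ⟨t, ht0, ht1, key t heqa hF0 hF1⟩
  rw [hK2A2]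
  set KK := K₁ ∪ A2 ∪ (-K₁) ∪ (-A2) with hKKdef
  have hmemKK : ∀ y : ℝ × ℝ, y ∈ KK ↔ y ∈ K₁ ∨ y ∈ A2 ∨ -y ∈ K₁ ∨ -y ∈ A2 := by
    intro y
    simp [hKKdef, Set.mem_union, Set.mem_neg, or_assoc]
  have hsymm : ∀ y ∈ KK, -y ∈ KK := by
    intro y hy
    rw [hmemKK] at hy ⊢
    rcases hy with h | h | h | h
    · exact Or.inr (Or.inr (Or.inl (by rwa [neg_neg])))
    · exact Or.inr (Or.inr (Or.inr (by rwa [neg_neg])))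
    · exact Or.inl h
    · exact Or.inr (Or.inl h)
  have habs : ∀ y ∈ KK, ∀ x' ∈ K₁, -1 ≤ det2 x' y ∧ det2 x' y ≤ 1 := by
    intro y hy x' hx'
    obtain ⟨p1, p2, p3, p4⟩ := hco x' hx'
    rw [hmemKK] at hy
    rcases hy with h | h | h | h
    · obtain ⟨q1, q2, q3, q4⟩ := hco y h
      rw [hplucker x' y]
      constructor <;> nlinarith [mul_nonneg p1 q3, mul_nonneg p3 q1,
        mul_le_mul_of_nonneg_left q4 p1, mul_le_mul_of_nonneg_left q2 p3,
        mul_le_mul_of_nonneg_left p2 q3, mul_le_mul_of_nonneg_left p4 q1]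
    · rw [hA2] at h
      obtain ⟨q1, q2, q3⟩ := h
      constructor
      · rw [hplucker x' y]
        nlinarith [mul_nonneg p1 q2, mul_nonneg p3 (neg_nonneg.mpr q1)]
      · exact q3 x' hx'
    · obtain ⟨q1, q2, q3, q4⟩ := hco (-y) h
      rw [hnegL] at q1 q2
      rw [hnegR] at q3 q4
      rw [hplucker x' y]
      constructor <;> nlinarith [mul_nonneg p1 (neg_nonneg.mpr (by linarith : det2 v y ≤ 0)),
        mul_nonneg p3 (neg_nonneg.mpr (by linarith : det2 y w ≤ 0)),
        mul_le_mul_of_nonneg_left (by linarith : -det2 v y ≤ 1) p1,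
        mul_le_mul_of_nonneg_left (by linarith : -det2 y w ≤ 1) p3]
    · rw [hA2] at h
      obtain ⟨q1, q2, q3⟩ := h
      rw [hnegL] at q1
      rw [hnegR] at q2
      have h1 : 0 ≤ det2 x' (-y) := by
        rw [hplucker x' (-y), hnegL, hnegR]
        nlinarith [mul_nonneg p1 (by linarith : (0:ℝ) ≤ -det2 v y),
          mul_nonneg p3 (by linarith : (0:ℝ) ≤ det2 y w)]
      have h2 : det2 x' (-y) ≤ 1 := q3 x' hx'
      rw [hnegR] at h1 h2
      constructor <;> linarith
  have hcb : ∀ y ∈ KK, -1 ≤ det2 y w ∧ det2 y w ≤ 1 ∧ -1 ≤ det2 v y ∧ det2 v y ≤ 1 := by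
    intro y hy
    have h1 := habs y hy w hwK
    have h2 := habs y hy v hvK
    have h3 := hswap y w
    exact ⟨by linarith [h1.2], by linarith [h1.1], h2.1, h2.2⟩
  have hexists : ∀ p ∈ KK, ∀ x : ℝ × ℝ, 0 ≤ det2 x w → det2 x w ≤ 1 →
      0 ≤ det2 v x → det2 v x ≤ 1 →
      ∃ u : ℝ, 0 ≤ u ∧ u ≤ 1 ∧ (1 - u) • p + u • x ∈ K₁ := by
    intro p hp x hx1 hx2 hx3 hx4
    have hcbp := hcb p hp
    rw [hmemKK] at hp
    rcases hp with h | h | h | h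
    · exact ⟨0, le_rfl, zero_le_one, by simpa using h⟩
    · rw [hA2] at h
      exact hCL p x hcbp.2.1 hcbp.2.2.2 (Or.inl h.1) hx1 hx2 hx3 hx4
    · obtain ⟨q1, q2, q3, q4⟩ := hco (-p) h
      rw [hnegL] at q1
      exact hCL p x hcbp.2.1 hcbp.2.2.2 (Or.inl (by linarith)) hx1 hx2 hx3 hx4
    · rw [hA2] at h
      have := h.2.1
      rw [hnegR] at this
      exact hCL p x hcbp.2.1 hcbp.2.2.2 (Or.inr (by linarith)) hx1 hx2 hx3 hx4
  have hmain : ∀ p ∈ KK, ∀ q ∈ KK, ∀ t1 t2 : ℝ, 0 ≤ t1 → 0 ≤ t2 → t1 + t2 = 1 →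
      0 ≤ det2 (t1 • p + t2 • q) w → 0 ≤ det2 v (t1 • p + t2 • q) →
      t1 • p + t2 • q ∈ K₁ := by
    intro p hp q hq t1 t2 ht1 ht2 ht hax hbx
    obtain ⟨x, hxdef⟩ : ∃ x : ℝ × ℝ, x = t1 • p + t2 • q := ⟨_, rfl⟩
    rw [← hxdef] at hax hbx ⊢
    have hcbp := hcb p hp
    have hcbq := hcb q hq
    have hax1 : det2 x w ≤ 1 := by
      rw [hxdef, hL]
      nlinarith [mul_le_mul_of_nonneg_left hcbp.2.1 ht1,
        mul_le_mul_of_nonneg_left hcbq.2.1 ht2]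
    have hbx1 : det2 v x ≤ 1 := by
      rw [hxdef, hR]
      nlinarith [mul_le_mul_of_nonneg_left hcbp.2.2.2 ht1,
        mul_le_mul_of_nonneg_left hcbq.2.2.2 ht2]
    obtain ⟨u₁, hu₁0, hu₁1, hP⟩ := hexists p hp x hax hax1 hbx hbx1
    obtain ⟨u₂, hu₂0, hu₂1, hQ⟩ := hexists q hq x hax hax1 hbx hbx1
    obtain ⟨D, hD⟩ : ∃ D : ℝ, D = 1 - u₂*t1 - u₁*t2 := ⟨_, rfl⟩
    have hD0 : 0 ≤ D := by
      nlinarith [mul_nonneg ht1 (by linarith : (0:ℝ) ≤ 1 - u₂),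
        mul_nonneg ht2 (by linarith : (0:ℝ) ≤ 1 - u₁)]
    rcases lt_or_eq_of_le hD0 with hDpos | hDzero
    · obtain ⟨r, hr⟩ : ∃ r : ℝ, r = (t2 - u₁*t2)/D := ⟨_, rfl⟩
      have hr0 : 0 ≤ r := by
        rw [hr]
        exact div_nonneg (by nlinarith [mul_nonneg ht2 (by linarith : (0:ℝ) ≤ 1 - u₁)]) hDpos.le
      have hr1 : r ≤ 1 := by
        rw [hr, div_le_one hDpos]
        nlinarith [mul_nonneg ht1 (by linarith : (0:ℝ) ≤ 1 - u₂)]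
      have ht1' : t1 = 1 - t2 := by linarith
      have hDne : 1 - u₂*(1-t2) - u₁*t2 ≠ 0 := by
        rw [← ht1', ← hD]; exact hDpos.ne'
      have hxPQ : x = (1 - r) • ((1 - u₁) • p + u₁ • x) + r • ((1 - u₂) • q + u₂ • x) := by
        rw [hxdef]
        match_scalars <;> rw [hr] <;> field_simp [hDpos.ne'] <;> subst hD ht1' <;> ring
      rw [hxPQ]
      exact hK₁conv hP hQ (by linarith) hr0 (by ring)
    · -- D = 0 : then x = (1-u₁) • p + u₁ • x
      have h1 : t2*(1-u₁) = 0 := by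
        nlinarith [mul_nonneg ht1 (by linarith : (0:ℝ) ≤ 1 - u₂),
          mul_nonneg ht2 (by linarith : (0:ℝ) ≤ 1 - u₁)]
      have hxP : x = (1 - u₁) • p + u₁ • x := by
        rcases mul_eq_zero.mp h1 with h | h
        · have ht1' : t1 = 1 := by linarith
          have hx : x = p := by rw [hxdef, h, ht1']; simp
          rw [hx]; module
        · have hu : u₁ = 1 := by linarith
          rw [hu]; simp
      rw [hxP]
      exact hP
  -- final
  rintro p hp q hq t1 t2 ht1 ht2 ht
  show t1 • p + t2 • q ∈ KK
  rw [hmemKK]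
  rcases le_total 0 (det2 (t1 • p + t2 • q) w) with hax | hax <;>
    rcases le_total 0 (det2 v (t1 • p + t2 • q)) with hbx | hbx
  · exact Or.inl (hmain p hp q hq t1 t2 ht1 ht2 ht hax hbx)
  · -- 0 ≤ a, b ≤ 0 : -(x) ∈ A2
    refine Or.inr (Or.inr (Or.inr ?_))
    rw [hA2]
    refine ⟨by rw [hnegL]; linarith, by rw [hnegR]; linarith, ?_⟩
    intro y hy
    rw [hnegR, hR]
    have h1 := (habs p hp y hy).1
    have h2 := (habs q hq y hy).1
    nlinarith [mul_le_mul_of_nonneg_left h1 ht1, mul_le_mul_of_nonneg_left h2 ht2]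
  · -- a ≤ 0, 0 ≤ b : A2
    refine Or.inr (Or.inl ?_)
    rw [hA2]
    refine ⟨hax, hbx, ?_⟩
    intro y hy
    rw [hR]
    have h1 := (habs p hp y hy).2
    have h2 := (habs q hq y hy).2
    nlinarith [mul_le_mul_of_nonneg_left h1 ht1, mul_le_mul_of_nonneg_left h2 ht2]
  · -- both ≤ 0 : -K₁
    refine Or.inr (Or.inr (Or.inl ?_))
    have hnegx : -(t1 • p + t2 • q) = t1 • (-p) + t2 • (-q) := by module
    rw [hnegx]
    apply hmain (-p) (hsymm p hp) (-q) (hsymm q hq) t1 t2 ht1 ht2 ht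
    · rw [← hnegx, hnegL]; linarith
    · rw [← hnegx, hnegR]; linarith
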